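/- In M_n(ℂ) with normalized trace τ, the sesquilinear form on M_n(ℂ) ⊗ M_n(ℂ) defined on elementary tensors by ⟪a⊗b, c⊗d⟫ = τ(c* a b d*) is positive semidefinite, i.e., ⟪ξ, ξ⟫ ≥ 0 for every ξ ∈ M_n(ℂ) ⊗ M_n(ℂ). -/
import Mathlib


open TensorProduct ComplexOrder Matrix

/-- the sesquilinear form on Mₙ(ℂ) ⊗ Mₙ(ℂ) determined on elementary
tensors by ⟪a⊗b, c⊗d⟫ = τ(c* a b d*) (τ the normalized trace) is positive
semidefinite. -/
theorem tensor_trace_form_positive {n : ℕ}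
    (B : (Matrix (Fin n) (Fin n) ℂ ⊗[ℂ] Matrix (Fin n) (Fin n) ℂ) →ₗ[ℂ]
         (Matrix (Fin n) (Fin n) ℂ ⊗[ℂ] Matrix (Fin n) (Fin n) ℂ) →ₗ⋆[ℂ] ℂ)
    (hB : ∀ a b c d : Matrix (Fin n) (Fin n) ℂ,
      B (a ⊗ₜ[ℂ] b) (c ⊗ₜ[ℂ] d) = (star c * a * b * star d).trace / n) :
    ∀ ξ : Matrix (Fin n) (Fin n) ℂ ⊗[ℂ] Matrix (Fin n) (Fin n) ℂ, 0 ≤ B ξ ξ := by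
  have μdef := LinearMap.mul' ℂ (Matrix (Fin n) (Fin n) ℂ)
  set μ : Matrix (Fin n) (Fin n) ℂ ⊗[ℂ] Matrix (Fin n) (Fin n) ℂ →ₗ[ℂ]
      Matrix (Fin n) (Fin n) ℂ := LinearMap.mul' ℂ (Matrix (Fin n) (Fin n) ℂ) with hμ
  have key : ∀ ξ η : Matrix (Fin n) (Fin n) ℂ ⊗[ℂ] Matrix (Fin n) (Fin n) ℂ,
      B ξ η = (μ ξ * (μ η)ᴴ).trace / n := by
    intro ξ η
    induction ξ using TensorProduct.induction_on with
    | zero => simp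
    | add x y hx hy =>
        simp only [map_add, LinearMap.add_apply, hx, hy, add_mul, Matrix.trace_add, add_div]
    | tmul a b =>
      induction η using TensorProduct.induction_on with
      | zero => simp
      | add x y hx hy =>
          simp only [map_add, LinearMap.map_add, hx, hy, Matrix.conjTranspose_add,
            mul_add, Matrix.trace_add, add_div]
      | tmul c d =>
        rw [hB]
        simp only [hμ, LinearMap.mul'_apply, Matrix.conjTranspose_mul]
        congr 1
        rw [Matrix.trace_mul_cycle (star c * a) b (star d),
          Matrix.trace_mul_cycle a b (dᴴ * cᴴ)]
        simp only [Matrix.star_eq_conjTranspose, mul_assoc]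
  intro ξ
  rw [key]
  have htr : (0:ℂ) ≤ (μ ξ * (μ ξ)ᴴ).trace := by
    rw [Matrix.trace]
    refine Finset.sum_nonneg fun i _ => ?_
    simp only [Matrix.diag_apply, Matrix.mul_apply, Matrix.conjTranspose_apply]
    exact Finset.sum_nonneg fun j _ => mul_star_self_nonneg _
  have hn : (0:ℂ) ≤ ((n:ℂ))⁻¹ := by
    rw [← Complex.ofReal_natCast, ← Complex.ofReal_inv]
    exact_mod_cast inv_nonneg.mpr (Nat.cast_nonneg n)
  calc (0:ℂ) ≤ (μ ξ * (μ ξ)ᴴ).trace * ((n:ℂ))⁻¹ := mul_nonneg htr hn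
  _ = (μ ξ * (μ ξ)ᴴ).trace / n := by rw [div_eq_mul_inv]
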